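/- Consider the ADMM x-z-u iteration for minimizing f(x) + g(z) subject to Ax − Bz = c, where f(x) = (1/2)(x−x̃)^T G(x−x̃) with G symmetric positive definite, B invertible, and g differentiable. If z^{k+2} = z^{k+1} (z has reached a fixed point of one iteration), then A x^{k+2} − B z^{k+1} − c = 0. -/
import Mathlib


open Matrix

noncomputable def mv {m n : ℕ} (M : Matrix (Fin m) (Fin n) ℝ)
    (v : EuclideanSpace ℝ (Fin n)) : EuclideanSpace ℝ (Fin m) :=
  Matrix.toEuclideanLin M v

lemma mv_mv {m n q : ℕ} (M : Matrix (Fin m) (Fin n) ℝ) (N : Matrix (Fin n) (Fin q) ℝ)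
    (v : EuclideanSpace ℝ (Fin q)) : mv M (mv N v) = mv (M * N) v := by
  simp [mv, Matrix.toEuclideanLin_apply, Matrix.mulVec_mulVec]

lemma mv_one {n : ℕ} (v : EuclideanSpace ℝ (Fin n)) : mv (1 : Matrix (Fin n) (Fin n) ℝ) v = v := by
  simp [mv, Matrix.toEuclideanLin_apply]

lemma mv_sub {m n : ℕ} (M : Matrix (Fin m) (Fin n) ℝ) (v w : EuclideanSpace ℝ (Fin n)) :
    mv M (v - w) = mv M v - mv M w := map_sub _ _ _

/-- For the ADMM x-z-u iteration with quadratic `f`, `B` invertible and `g`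
differentiable, if `z^{k+2} = z^{k+1}` then `A x^{k+2} − B z^{k+1} − c = 0`. -/
theorem admm_xzu_fixed_point_residual {p n : ℕ}
    (G : Matrix (Fin p) (Fin p) ℝ) (hG : G.PosDef)
    (A : Matrix (Fin n) (Fin p) ℝ) (B : Matrix (Fin n) (Fin n) ℝ) (hB : IsUnit B.det)
    (g : EuclideanSpace ℝ (Fin n) → ℝ)
    (gg : EuclideanSpace ℝ (Fin n) → EuclideanSpace ℝ (Fin n))
    (hg : ∀ z, HasGradientAt g (gg z) z)
    (xt : EuclideanSpace ℝ (Fin p)) (c : EuclideanSpace ℝ (Fin n))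
    (μ : ℝ) (hμ : 0 < μ)
    (x : ℕ → EuclideanSpace ℝ (Fin p)) (z u : ℕ → EuclideanSpace ℝ (Fin n))
    (hx : ∀ k, x (k+1)
      = mv (G + μ • (Aᵀ * A))⁻¹ (mv G xt + μ • mv Aᵀ (mv B (z k) + c - u k)))
    (hz : ∀ k, gg (z (k+1))
      = μ • mv Bᵀ (mv A (x (k+1)) - mv B (z (k+1)) + u k - c))
    (hu : ∀ k, u (k+1) = u k + mv A (x (k+1)) - mv B (z (k+1)) - c)
    (k : ℕ) (hfix : z (k+2) = z (k+1)) :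
    mv A (x (k+2)) - mv B (z (k+1)) - c = 0 := by
  set r := mv A (x (k+2)) - mv B (z (k+1)) - c with hr
  have h1 := hz k
  have h2 := hz (k+1)
  rw [hfix] at h2
  have h3 := hu k
  -- argument of h2 equals u (k+1) + r, argument of h1 equals u (k+1)
  have harg1 : mv A (x (k+1)) - mv B (z (k+1)) + u k - c = u (k+1) := by
    rw [h3]; abel
  have harg2 : mv A (x (k+2)) - mv B (z (k+1)) + u (k+1) - c = u (k+1) + r := by
    rw [hr]; abel
  rw [harg1] at h1
  rw [harg2] at h2
  have key : mv Bᵀ r = 0 := by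
    have h5 := h2.symm.trans h1
    have h4 : mv Bᵀ (u (k+1) + r) = mv Bᵀ (u (k+1)) + mv Bᵀ r := map_add _ _ _
    rw [h4, smul_add] at h5
    have h6 : μ • mv Bᵀ r = 0 := by
      have := congrArg (fun w => w - μ • mv Bᵀ (u (k+1))) h5
      simpa [add_sub_cancel_left] using this
    rcases smul_eq_zero.mp h6 with h | h
    · exact absurd h (ne_of_gt hμ)
    · exact h
  have hBt : IsUnit (Bᵀ).det := by rwa [Matrix.det_transpose]
  have : mv (Bᵀ)⁻¹ (mv Bᵀ r) = r := by
    rw [mv_mv, Matrix.nonsing_inv_mul _ hBt, mv_one]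
  rw [key] at this
  rw [← this]
  exact map_zero _
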